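/- With the notation above, for each real λ, define B_λ := (I − λ Π'_λ A_N⁻¹)|_{G_λ}, where Π'_λ is the a-orthogonal projection of H¹ onto G_λ. Then a[B_λ u, v] = a[u,v] − λ(u,v) for all u, v ∈ G_λ, and consequently B_λ is a bounded self-adjoint operator in the Hilbert space G_λ equipped with the inner product a[·,·]. -/

import Mathlib

noncomputable section

open scoped InnerProductSpace

local notation "⟪" x ", " y "⟫" => @inner ℂ _ _ x y

variable {H H1 : Type*} [NormedAddCommGroup H] [InnerProductSpace ℂ H] [CompleteSpace H]
  [NormedAddCommGroup H1] [InnerProductSpace ℂ H1] [CompleteSpace H1]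

/-- `MemA J H0 u f` says that `u` belongs to the domain `H¹_A` of the maximal
operator `A` (i.e. the functional `v ↦ a[u,v]` on `H0` is `H`-continuous) and
`A u = f`:  `a[u, v] = (f, v)` for all `v ∈ H0`. -/
def MemA (J : H1 →L[ℂ] H) (H0 : Submodule ℂ H1) (u : H1) (f : H) : Prop :=
  ∀ v ∈ H0, ⟪u, (v : H1)⟫ = ⟪f, J v⟫

/- For real `λ`, let `G_λ = ker (A - λ)` (a closed subspace of `H1`, hypothesized
here as a complete submodule `Gl` with membership characterized via `MemA`), let
`Π'_λ` be the `a`-orthogonal projection of `H1` onto `G_λ`, and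
`B_λ := (I - λ Π'_λ A_N⁻¹)|_{G_λ}`.  Then `a[B_λ u, v] = a[u,v] - λ (u,v)` for
`u, v ∈ G_λ`, and `B_λ` is a (bounded) self-adjoint operator on `(G_λ, a[·,·])`. -/
theorem stmt7
    (J : H1 →L[ℂ] H) (hJinj : Function.Injective J) (hJdense : DenseRange J)
    (H0 : Submodule ℂ H1) [CompleteSpace H0]
    (hH0dense : DenseRange (fun v : H0 => J v))
    (TN : H →L[ℂ] H1) (hTN : ∀ (u : H) (v : H1), ⟪TN u, v⟫ = ⟪u, J v⟫)
    (lam : ℝ) (Gl : Submodule ℂ H1) [CompleteSpace Gl]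
    (hGl : ∀ u : H1, u ∈ Gl ↔ MemA J H0 u ((lam : ℂ) • J u))
    (Bl : Gl →L[ℂ] Gl)
    (hBl : Bl = ContinuousLinearMap.id ℂ Gl -
      (lam : ℂ) • (Gl.orthogonalProjectionOnto.comp ((TN.comp J).comp Gl.subtypeL))) :
    (∀ u v : Gl, ⟪((Bl u : Gl) : H1), (v : H1)⟫
        = ⟪(u : H1), (v : H1)⟫ - (lam : ℂ) * ⟪J (u : H1), J (v : H1)⟫) ∧
    IsSelfAdjoint Bl := by
  have key : ∀ u v : Gl, ⟪((Bl u : Gl) : H1), (v : H1)⟫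
      = ⟪(u : H1), (v : H1)⟫ - (lam : ℂ) * ⟪J (u : H1), J (v : H1)⟫ := by
    intro u v
    have hproj : ⟪((Gl.orthogonalProjectionOnto (TN (J (u : H1))) : Gl) : H1), (v : H1)⟫
        = ⟪TN (J (u : H1)), (v : H1)⟫ := by
      have h0 := Submodule.starProjection_inner_eq_zero (K := Gl) (TN (J (u : H1))) (v : H1) v.2
      rw [inner_sub_left, sub_eq_zero] at h0
      exact h0.symm
    rw [hBl]
    simp only [ContinuousLinearMap.sub_apply, ContinuousLinearMap.smul_apply,
      ContinuousLinearMap.coe_id', id_eq, ContinuousLinearMap.comp_apply,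
      Submodule.subtypeL_apply]
    rw [Submodule.coe_sub, Submodule.coe_smul, inner_sub_left, inner_smul_left]
    rw [hproj, hTN]
    simp [Complex.conj_ofReal]
  refine ⟨key, ?_⟩
  rw [ContinuousLinearMap.isSelfAdjoint_iff_isSymmetric]
  intro u v
  show ⟪((Bl u : Gl) : H1), (v : H1)⟫ = ⟪(u : H1), ((Bl v : Gl) : H1)⟫
  rw [key u v, ← inner_conj_symm ((u : H1)) (((Bl v : Gl)) : H1), key v u]
  rw [map_sub, map_mul, Complex.conj_ofReal, inner_conj_symm, inner_conj_symm]

end
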